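/- Let A and ⟨0⟩ be C-hyperideals of a commutative multiplicative hyperring G and S an MCS with A ∩ S = ∅. If A is a weakly quasi S-primary hyperideal of G such that A² ≠ ⟨0⟩, then A is a quasi S-primary hyperideal of G. -/

import Mathlib

open Set

/-- A commutative multiplicative hyperring: a commutative additive group with a
commutative, associative hyperoperation `hmul` satisfying `(-a)∘b = -(a∘b)`,
weak distributivity, and having an identity element `e` with `a ∈ e∘a`. -/
class MulHyperring (G : Type*) extends AddCommGroup G where
  hmul : G → G → Set G
  hmul_nonempty : ∀ a b : G, (hmul a b).Nonempty
  hmul_comm : ∀ a b : G, hmul a b = hmul b a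
  hmul_assoc : ∀ a b c : G, (⋃ x ∈ hmul a b, hmul x c) = ⋃ x ∈ hmul b c, hmul a x
  neg_hmul : ∀ a b : G, hmul (-a) b = (fun x => -x) '' (hmul a b)
  hmul_add : ∀ a b c : G,
    hmul a (b + c) ⊆ {x | ∃ u ∈ hmul a b, ∃ v ∈ hmul a c, x = u + v}
  e : G
  e_mem : ∀ a : G, a ∈ hmul e a

namespace MulHyperring

variable {G : Type*} [MulHyperring G]

/-- Hyperproduct of an element with a set: `a ∘ B = ⋃ b ∈ B, a ∘ b`. -/
def smulSet (a : G) (B : Set G) : Set G := ⋃ b ∈ B, hmul a b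

/-- Hyperproduct of two sets. -/
def setMul (A B : Set G) : Set G := ⋃ a ∈ A, ⋃ b ∈ B, hmul a b

/-- Hyperproduct `a₁ ∘ a₂ ∘ ⋯ ∘ aₙ` of a (nonempty) list of elements. -/
def hProd : List G → Set G
  | [] => ∅
  | [a] => {a}
  | a :: b :: l => smulSet a (hProd (b :: l))

/-- `aⁿ` as a hyperproduct. -/
def hPow (a : G) (n : ℕ) : Set G := hProd (List.replicate n a)

/-- `A` is a hyperideal of `G`. -/
def IsHyperideal (A : Set G) : Prop :=
  A.Nonempty ∧ (∀ x ∈ A, ∀ y ∈ A, x - y ∈ A) ∧ ∀ r : G, ∀ x ∈ A, hmul r x ⊆ A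

/-- `A` is a `C`-hyperideal: any finite hyperproduct meeting `A` is contained in `A`. -/
def IsCHyperideal (A : Set G) : Prop :=
  IsHyperideal A ∧ ∀ l : List G, l ≠ [] → (hProd l ∩ A).Nonempty → hProd l ⊆ A

/-- The radical of a (C-)hyperideal: `{a | aⁿ ⊆ A for some n ≥ 1}`. -/
def rad (A : Set G) : Set G := {a | ∃ n : ℕ, 1 ≤ n ∧ hPow a n ⊆ A}

/-- The hyperideal generated by a set. -/
def idealGen (X : Set G) : Set G := ⋂₀ {A | IsHyperideal A ∧ X ⊆ A}

/-- The hyperideal product of two hyperideals. -/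
def idealMul (A B : Set G) : Set G := idealGen (setMul A B)

/-- Multiplicative closed subset. -/
def IsMCS (S : Set G) : Prop :=
  e ∈ S ∧ ∀ s₁ ∈ S, ∀ s₂ ∈ S, (hmul s₁ s₂ ∩ S).Nonempty

/-- Prime hyperideal. -/
def IsPrime (P : Set G) : Prop :=
  IsHyperideal P ∧ P ≠ univ ∧ ∀ x y : G, hmul x y ⊆ P → x ∈ P ∨ y ∈ P

/-- `S`-prime hyperideal. -/
def IsSPrime (S A : Set G) : Prop :=
  IsHyperideal A ∧ A ∩ S = ∅ ∧
    ∃ t ∈ S, ∀ u v : G, hmul u v ⊆ A → hmul t u ⊆ A ∨ hmul t v ⊆ A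

/-- `S`-primary hyperideal. -/
def IsSPrimary (S A : Set G) : Prop :=
  IsHyperideal A ∧ A ∩ S = ∅ ∧
    ∃ t ∈ S, ∀ u v : G, hmul u v ⊆ A → hmul t u ⊆ A ∨ hmul t v ⊆ rad A

/-- Quasi `S`-primary hyperideal. -/
def IsQuasiSPrimary (S A : Set G) : Prop :=
  IsHyperideal A ∧ A ∩ S = ∅ ∧
    ∃ t ∈ S, ∀ u v : G, hmul u v ⊆ A → hmul t u ⊆ rad A ∨ hmul t v ⊆ rad A

/-- Weakly quasi `S`-primary hyperideal. -/
def IsWeaklyQuasiSPrimary (S A : Set G) : Prop :=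
  IsHyperideal A ∧ A ∩ S = ∅ ∧
    ∃ t ∈ S, ∀ u v : G, 0 ∉ hmul u v → hmul u v ⊆ A →
      hmul t u ⊆ rad A ∨ hmul t v ⊆ rad A

/-- Strongly quasi `S`-primary hyperideal. -/
def IsStronglyQuasiSPrimary (S A : Set G) : Prop :=
  IsHyperideal A ∧ A ∩ S = ∅ ∧
    ∃ t ∈ S, ∀ u v : G, hmul u v ⊆ A →
      smulSet t (hPow u 2) ⊆ A ∨ hmul t v ⊆ rad A

/-- The residual `(B : x) = {y | y ∘ x ⊆ B}`. -/
def colon (B : Set G) (x : G) : Set G := {y | hmul y x ⊆ B}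

end MulHyperring

namespace MulHyperring

variable {G : Type*} [MulHyperring G]

lemma zero_mem_ideal {A : Set G} (h : IsHyperideal A) : (0:G) ∈ A := by
  obtain ⟨⟨x, hx⟩, hsub, _⟩ := h
  simpa using hsub x hx x hx

lemma ideal_neg {A : Set G} (h : IsHyperideal A) {x : G} (hx : x ∈ A) : -x ∈ A := by
  simpa using h.2.1 0 (zero_mem_ideal h) x hx

lemma ideal_add {A : Set G} (h : IsHyperideal A) {x y : G} (hx : x ∈ A) (hy : y ∈ A) :
    x + y ∈ A := by
  simpa [sub_neg_eq_add] using h.2.1 x hx (-y) (ideal_neg h hy)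

lemma absorb {A : Set G} (h : IsHyperideal A) {x : G} (hx : x ∈ A) (r : G) :
    hmul r x ⊆ A := h.2.2 r x hx

lemma absorb' {A : Set G} (h : IsHyperideal A) {x : G} (hx : x ∈ A) (r : G) :
    hmul x r ⊆ A := by rw [hmul_comm]; exact absorb h hx r

lemma hProd_pair (a b : G) : hProd [a, b] = hmul a b := by
  simp [hProd, smulSet]

lemma c_pair {A : Set G} (h : IsCHyperideal A) {a b : G}
    (hne : (hmul a b ∩ A).Nonempty) : hmul a b ⊆ A := by
  have := h.2 [a, b] (by simp) (by rwa [hProd_pair])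
  rwa [hProd_pair] at this

lemma idealGen_ideal (X : Set G) : IsHyperideal (idealGen X) := by
  refine ⟨⟨0, ?_⟩, ?_, ?_⟩
  · intro B hB; exact zero_mem_ideal hB.1
  · intro x hx y hy B hB; exact hB.1.2.1 x (hx B hB) y (hy B hB)
  · intro r x hx z hz B hB; exact hB.1.2.2 r x (hx B hB) hz

lemma subset_idealGen (X : Set G) : X ⊆ idealGen X :=
  fun _ hx _ hB => hB.2 hx

lemma idealGen_le {X B : Set G} (hB : IsHyperideal B) (hXB : X ⊆ B) :
    idealGen X ⊆ B := fun _ hx => hx B ⟨hB, hXB⟩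

lemma hPow_one (a : G) : hPow a 1 = {a} := rfl

lemma hPow_succ (a : G) {n : ℕ} (hn : 1 ≤ n) :
    hPow a (n + 1) = smulSet a (hPow a n) := by
  obtain ⟨k, rfl⟩ : ∃ k, n = k + 1 := ⟨n - 1, by omega⟩
  rfl

lemma mem_smulSet {a : G} {B : Set G} {x : G} :
    x ∈ smulSet a B ↔ ∃ b ∈ B, x ∈ hmul a b := by simp [smulSet]

lemma mem_rad_of_mem {A : Set G} {x : G} (hx : x ∈ A) : x ∈ rad A :=
  ⟨1, le_rfl, by simpa [hPow_one] using hx⟩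

/-- `rad A` is closed under addition of elements of `A`. -/
lemma radd {A : Set G} (hA : IsHyperideal A) {p q : G} (hp : p ∈ rad A) (hq : q ∈ A) :
    p + q ∈ rad A := by
  obtain ⟨m, hm1, hm⟩ := hp
  have key : ∀ n, 1 ≤ n →
      hPow (p + q) n ⊆ {x | ∃ c ∈ hPow p n, ∃ a ∈ A, x = c + a} := by
    intro n
    induction n with
    | zero => omega
    | succ k ih =>
      intro _
      rcases Nat.eq_zero_or_pos k with hk | hk
      · subst hk
        intro x hx
        have hx' : x = p + q := by simpa [hPow_one] using hx
        exact ⟨p, by simp [hPow_one], q, hq, hx'⟩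
      · intro x hx
        rw [hPow_succ _ hk, mem_smulSet] at hx
        obtain ⟨b, hb, hxb⟩ := hx
        obtain ⟨c, hc, a, ha, rfl⟩ := ih hk hb
        obtain ⟨u1, hu1, w, hw, rfl⟩ := hmul_add (p + q) c a hxb
        have hwA : w ∈ A := absorb hA ha _ hw
        rw [hmul_comm] at hu1
        obtain ⟨s1, hs1, s2, hs2, rfl⟩ := hmul_add c p q hu1
        refine ⟨s1, ?_, s2 + w, ideal_add hA (absorb hA hq c hs2) hwA, by abel⟩
        rw [hPow_succ _ hk, mem_smulSet]
        exact ⟨c, hc, by rwa [hmul_comm] at hs1⟩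
  refine ⟨m, hm1, fun x hx => ?_⟩
  obtain ⟨c, hc, a, ha, rfl⟩ := key m hm1 hx
  exact ideal_add hA (hm hc) ha

/-- if `t∘(u+a) ⊆ rad A` with `a ∈ A`, then `t∘u ⊆ rad A`. -/
lemma shift {A : Set G} (hA : IsHyperideal A) {t u a : G} (ha : a ∈ A)
    (h : hmul t (u + a) ⊆ rad A) : hmul t u ⊆ rad A := by
  intro z hz
  have hz' : z ∈ hmul t ((u + a) + (-a)) := by
    rwa [add_neg_cancel_right]
  obtain ⟨x, hx, y, hy, rfl⟩ := hmul_add t (u + a) (-a) hz'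
  have hyA : y ∈ A := by
    rw [hmul_comm, neg_hmul] at hy
    obtain ⟨y', hy', rfl⟩ := hy
    exact ideal_neg hA (absorb' hA ha t hy')
  exact radd hA (h hx) hyA

end MulHyperring

open MulHyperring in
theorem weaklyQuasiSPrimary_sq_ne_zero {G : Type*} [MulHyperring G] (A S : Set G) (hA : IsCHyperideal A)
    (hS : IsMCS S) (hAS : A ∩ S = ∅)
    (h0C : IsCHyperideal (idealGen {0} : Set G))
    (hw : IsWeaklyQuasiSPrimary S A) (hsq : idealMul A A ≠ idealGen {0}) :
    IsQuasiSPrimary S A := by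
  obtain ⟨hAI, -, t, htS, hwt⟩ := hw
  refine ⟨hA.1, hAS, t, htS, ?_⟩
  set Z := (idealGen {0} : Set G) with hZdef
  have hZI : IsHyperideal Z := idealGen_ideal _
  have h0Z : (0 : G) ∈ Z := subset_idealGen _ rfl
  -- Case 1 (and, by symmetry, Case 2) helper
  have case1 : ∀ u v : G, hmul u v ⊆ A → hmul u v ⊆ Z →
      (∃ a ∈ A, ¬ hmul u a ⊆ Z) → hmul t u ⊆ rad A ∨ hmul t v ⊆ rad A := by
    intro u v huvA huvZ ⟨a, haA, hna⟩
    have hwsub : hmul u (v + a) ⊆ A := by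
      intro x hx
      obtain ⟨x1, hx1, x2, hx2, rfl⟩ := hmul_add u v a hx
      exact ideal_add hA.1 (huvA hx1) (absorb hA.1 haA u hx2)
    have h0w : (0 : G) ∉ hmul u (v + a) := by
      intro h0
      obtain ⟨x1, hx1, x2, hx2, hxeq⟩ := hmul_add u v a h0
      have hx2Z : x2 ∈ Z := by
        have : x2 = -x1 := eq_neg_of_add_eq_zero_left (by rw [add_comm]; exact hxeq.symm)
        rw [this]
        exact ideal_neg hZI (huvZ hx1)
      exact hna (c_pair h0C ⟨x2, hx2, hx2Z⟩)
    rcases hwt u (v + a) h0w hwsub with h | h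
    · exact Or.inl h
    · exact Or.inr (shift hA.1 haA h)
  intro u v huv
  by_cases h0 : (0 : G) ∈ hmul u v
  · have huvZ : hmul u v ⊆ Z := c_pair h0C ⟨0, h0, h0Z⟩
    by_cases hu : ∃ a ∈ A, ¬ hmul u a ⊆ Z
    · exact case1 u v huv huvZ hu
    by_cases hv : ∃ b ∈ A, ¬ hmul v b ⊆ Z
    · exact (case1 v u (by rwa [hmul_comm]) (by rwa [hmul_comm]) hv).symm
    push_neg at hu hv
    -- Case 3: u∘A ⊆ Z and v∘A ⊆ Z; use A² ≠ ⟨0⟩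
    have hab : ∃ a ∈ A, ∃ b ∈ A, ¬ hmul a b ⊆ Z := by
      by_contra hc
      push_neg at hc
      apply hsq
      refine subset_antisymm (idealGen_le hZI ?_) (idealGen_le (idealGen_ideal _) ?_)
      · intro x hx
        simp only [setMul, mem_iUnion] at hx
        obtain ⟨a, ha, b, hb, hxab⟩ := hx
        exact hc a ha b hb hxab
      · simpa [idealMul] using zero_mem_ideal (idealGen_ideal (setMul A A))
    obtain ⟨a, haA, b, hbA, hab⟩ := hab
    have hsubA : hmul (u + a) (v + b) ⊆ A := by
      intro x hx
      rw [hmul_comm] at hx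
      obtain ⟨x1, hx1, x2, hx2, rfl⟩ := hmul_add (v + b) u a hx
      have hx2A : x2 ∈ A := absorb hA.1 haA _ hx2
      rw [hmul_comm] at hx1
      obtain ⟨y1, hy1, y2, hy2, rfl⟩ := hmul_add u v b hx1
      exact ideal_add hA.1 (ideal_add hA.1 (huv hy1) (absorb hA.1 hbA u hy2)) hx2A
    have h0w : (0 : G) ∉ hmul (u + a) (v + b) := by
      intro h0
      obtain ⟨x, hx, y, hy, hxy⟩ := hmul_add (u + a) v b h0
      rw [hmul_comm] at hx hy
      obtain ⟨x1, hx1, x2, hx2, rfl⟩ := hmul_add v u a hx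
      obtain ⟨y1, hy1, y2, hy2, rfl⟩ := hmul_add b u a hy
      have hx1Z : x1 ∈ Z := huvZ (by rwa [hmul_comm] at hx1)
      have hx2Z : x2 ∈ Z := hv a haA hx2
      have hy1Z : y1 ∈ Z := hu b hbA (by rwa [hmul_comm] at hy1)
      have hy2Z : y2 ∈ Z := by
        have h' : x1 + x2 + y1 + y2 = 0 := by rw [add_assoc]; exact hxy.symm
        have : y2 = -(x1 + x2 + y1) := eq_neg_of_add_eq_zero_left (by rw [add_comm]; exact h')
        rw [this]
        exact ideal_neg hZI (ideal_add hZI (ideal_add hZI hx1Z hx2Z) hy1Z)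
      have : y2 ∈ hmul a b := by rwa [hmul_comm] at hy2
      exact hab (c_pair h0C ⟨y2, this, hy2Z⟩)
    rcases hwt (u + a) (v + b) h0w hsubA with h | h
    · exact Or.inl (shift hA.1 haA h)
    · exact Or.inr (shift hA.1 hbA h)
  · exact hwt u v h0 huv
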